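/- Let v : (∏_i Fin(k_i+1)) → ℝ≥0 be monotone nondecreasing in each coordinate and d-concave: for all coordinates j and profiles s ≤ s' (coordinatewise in all coordinates except j, with s_j = s'_j), d·(v(s_{-j}, t+1) − v(s_{-j}, t)) ≥ v(s'_{-j}, t+1) − v(s'_{-j}, t) for all t. Let s be a profile and A, B a partition of the coordinates ≠ i*, and let a = v(profile with coordinates in A ∪ {i*} set to s and coordinates in B set to 0) and b = v(profile with coordinates in B ∪ {i*} set to s and coordinates in A set to 0). Then a + b ≥ (2/(d+1))·v(s) (assuming v(0⃗) ≥ 0). -/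

import Mathlib

/-- For a nonnegative, coordinatewise monotone, `d`-concave valuation `v` on a
product signal space, a profile `s`, a distinguished coordinate `i*`, and a
partition `A, B` of the remaining coordinates: the values at the two
intermediate profiles (coordinates of `A ∪ {i*}` set to `s`, rest zero; and
coordinates of `B ∪ {i*}` set to `s`, rest zero) sum to at least
`(2/(d+1))·v(s)`. -/
theorem d_concave_two_orderings
    (n : ℕ) (v : (Fin n → ℕ) → ℝ) (d : ℝ) (hd : 1 ≤ d)
    (hnonneg : ∀ s, 0 ≤ v s) (hmono : Monotone v)
    (hconc : ∀ (j : Fin n) (s s' : Fin n → ℕ), (∀ l, l ≠ j → s l ≤ s' l) →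
      ∀ t : ℕ,
        v (Function.update s' j (t + 1)) - v (Function.update s' j t) ≤
          d * (v (Function.update s j (t + 1)) - v (Function.update s j t)))
    (s : Fin n → ℕ) (istar : Fin n) (A B : Finset (Fin n))
    (hAB : A ∪ B = Finset.univ.erase istar) (hdisj : Disjoint A B) :
    2 / (d + 1) * v s ≤
      v (fun j => if j ∈ A ∨ j = istar then s j else 0) +
      v (fun j => if j ∈ B ∨ j = istar then s j else 0) := by
  classical
  -- single-coordinate telescoping lemma
  have step : ∀ (p q : Fin n → ℕ), p ≤ q → ∀ j : Fin n, p j = q j →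
      ∀ t1 : ℕ, v (Function.update q j t1) - v (Function.update q j 0) ≤
        d * (v (Function.update p j t1) - v (Function.update p j 0)) := by
    intro p q hpq j _ t1
    induction t1 with
    | zero => simp
    | succ t ih =>
      have h := hconc j p q (fun l _ => hpq l) t
      linarith
  -- multi-coordinate lemma
  have key : ∀ (C : Finset (Fin n)) (p q : Fin n → ℕ), p ≤ q →
      (∀ j ∈ C, p j = 0) → (∀ j ∈ C, q j = 0) →
      v (fun j => if j ∈ C then s j else q j) - v q ≤
        d * (v (fun j => if j ∈ C then s j else p j) - v p) := by
    intro C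
    induction C using Finset.induction_on with
    | empty => intro p q _ _ _; simp
    | insert j C hjC ih =>
      intro p q hpq hp0 hq0
      set p' : Fin n → ℕ := fun l => if l ∈ C then s l else p l with hp'
      set q' : Fin n → ℕ := fun l => if l ∈ C then s l else q l with hq'
      have hp'j : p' j = 0 := by simp [hp', hjC, hp0 j (Finset.mem_insert_self j C)]
      have hq'j : q' j = 0 := by simp [hq', hjC, hq0 j (Finset.mem_insert_self j C)]
      have hpq' : p' ≤ q' := by
        intro l
        by_cases hl : l ∈ C <;> simp [hp', hq', hl, hpq l]
      have eq1 : (fun l => if l ∈ insert j C then s l else q l) =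
          Function.update q' j (s j) := by
        funext l
        by_cases hl : l = j
        · subst hl; simp [Function.update_self]
        · simp [Function.update_of_ne hl, hq', hl]
      have eq2 : (fun l => if l ∈ insert j C then s l else p l) =
          Function.update p' j (s j) := by
        funext l
        by_cases hl : l = j
        · subst hl; simp [Function.update_self]
        · simp [Function.update_of_ne hl, hp', hl]
      have eq3 : Function.update q' j 0 = q' := by
        rw [← hq'j]; exact Function.update_eq_self j q'
      have eq4 : Function.update p' j 0 = p' := by
        rw [← hp'j]; exact Function.update_eq_self j p'
      have h1 := step p' q' hpq' j (by rw [hp'j, hq'j]) (s j)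
      rw [eq3, eq4] at h1
      have h2 := ih p q hpq (fun l hl => hp0 l (Finset.mem_insert_of_mem hl))
        (fun l hl => hq0 l (Finset.mem_insert_of_mem hl))
      rw [eq1, eq2]
      -- h2 is stated with p', q' as the "raised" functions
      have h2' : v q' - v q ≤ d * (v p' - v p) := h2
      linarith
  set x : Fin n → ℕ := fun j => if j ∈ A ∨ j = istar then s j else 0 with hx
  set y : Fin n → ℕ := fun j => if j ∈ B ∨ j = istar then s j else 0 with hy
  set z : Fin n → ℕ := fun j => if j = istar then s j else 0 with hz
  have hBne : ∀ j ∈ B, j ≠ istar ∧ j ∉ A := by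
    intro j hj
    have : j ∈ A ∪ B := Finset.mem_union_right _ hj
    rw [hAB] at this
    exact ⟨Finset.ne_of_mem_erase this, fun hA => (Finset.disjoint_left.mp hdisj hA) hj⟩
  have hAne : ∀ j ∈ A, j ≠ istar ∧ j ∉ B := by
    intro j hj
    have : j ∈ A ∪ B := Finset.mem_union_left _ hj
    rw [hAB] at this
    exact ⟨Finset.ne_of_mem_erase this, fun hB => (Finset.disjoint_left.mp hdisj hj) hB⟩
  have hcover : ∀ j : Fin n, j ∉ A → j ∉ B → j = istar := by
    intro j hA hB
    by_contra h
    have : j ∈ Finset.univ.erase istar := Finset.mem_erase.mpr ⟨h, Finset.mem_univ j⟩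
    rw [← hAB] at this
    rcases Finset.mem_union.mp this with h' | h' <;> [exact hA h'; exact hB h']
  have hzx : z ≤ x := by
    intro j
    by_cases hj : j = istar <;> simp [hz, hx, hj]
  have hzy : z ≤ y := by
    intro j
    by_cases hj : j = istar <;> simp [hz, hy, hj]
  have hzB : ∀ j ∈ B, z j = 0 := fun j hj => by simp [hz, (hBne j hj).1]
  have hxB : ∀ j ∈ B, x j = 0 := fun j hj => by simp [hx, (hBne j hj).1, (hBne j hj).2]
  have hzA : ∀ j ∈ A, z j = 0 := fun j hj => by simp [hz, (hAne j hj).1]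
  have hyA : ∀ j ∈ A, y j = 0 := fun j hj => by simp [hy, (hAne j hj).1, (hAne j hj).2]
  have k1 := key B z x hzx hzB hxB
  have k2 := key A z y hzy hzA hyA
  have eB1 : (fun j => if j ∈ B then s j else x j) = s := by
    funext j
    by_cases hj : j ∈ B
    · simp [hj]
    · by_cases hj' : j ∈ A
      · simp [hx, hj, hj']
      · simp [hx, hj, hj', hcover j hj' hj]
  have eB2 : (fun j => if j ∈ B then s j else z j) = y := by
    funext j
    by_cases hj : j ∈ B
    · simp [hy, hj]
    · by_cases hj' : j = istar <;> simp [hz, hy, hj, hj']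
  have eA1 : (fun j => if j ∈ A then s j else y j) = s := by
    funext j
    by_cases hj : j ∈ A
    · simp [hj]
    · by_cases hj' : j ∈ B
      · simp [hy, hj, hj']
      · simp [hy, hj, hj', hcover j hj hj']
  have eA2 : (fun j => if j ∈ A then s j else z j) = x := by
    funext j
    by_cases hj : j ∈ A
    · simp [hx, hj]
    · by_cases hj' : j = istar <;> simp [hz, hx, hj, hj']
  rw [eB1, eB2] at k1
  rw [eA1, eA2] at k2
  have hzpos : 0 ≤ v z := hnonneg z
  have hdpos : (0:ℝ) < d + 1 := by linarith
  have hdz : 0 ≤ d * v z := mul_nonneg (by linarith) hzpos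
  rw [div_mul_eq_mul_div, div_le_iff₀ hdpos]
  nlinarith [k1, k2]
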